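/- Let λ be a partition with all of: h(λ) < p, empty p-core, and all λ-normal nodes of the same residue mod p; moreover λ₁ − λ_{h(λ)} + h(λ) = p; and suppose the residue of every core(λ)-normal node equals the residue of the bottom removable node of λ. Then λ = λ^{(H,x)} for some 1 < H < p with H ∤ x, where λ^{(H,x)} is the partition of px whose abacus is obtained from the staircase [0,H) (with all positions < 0 filled) by distributing x upward p-shifts evenly: explicitly λ^{(H,x)} = P(Λ) with Λ having beads exactly at (−∞,0) ∪ [(q+1)p, (q+1)p+r) ∪ [qp+r, qp+H), q = ⌊x/H⌋, r = x mod H. -/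

import Mathlib

open scoped Classical

/-- A partition of a natural number: a weakly decreasing, eventually zero sequence of
naturals; `part i` is the `i`-th part for `i ≥ 1` (the value `part 0` is irrelevant). -/
structure Ptn where
  part : ℕ → ℕ
  antitone : ∀ ⦃i j : ℕ⦄, 1 ≤ i → i ≤ j → part j ≤ part i
  eventually_zero : ∃ N, ∀ i, N ≤ i → part i = 0

namespace Ptn

/-- The height of a partition: the number of (equivalently, the largest index of a)
nonzero part. -/
noncomputable def height (l : Ptn) : ℕ := sSup {i | 1 ≤ i ∧ l.part i ≠ 0}

/-- Row `i` carries a removable node `(i, λ_i)`. -/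
def Removable (l : Ptn) (i : ℕ) : Prop := 1 ≤ i ∧ l.part (i + 1) < l.part i

/-- Row `i` carries an addable node `(i, λ_i + 1)`. -/
def Addable (l : Ptn) (i : ℕ) : Prop := i = 1 ∨ (2 ≤ i ∧ l.part i < l.part (i - 1))

/-- Residue mod `p` of the removable node in row `i`, namely `λ_i - i  (mod p)`. -/
def remRes (p : ℕ) (l : Ptn) (i : ℕ) : ZMod p := (((l.part i : ℤ) - (i : ℤ) : ℤ) : ZMod p)

/-- Residue mod `p` of the addable node in row `i`, namely `λ_i + 1 - i  (mod p)`. -/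
def addRes (p : ℕ) (l : Ptn) (i : ℕ) : ZMod p :=
  (((l.part i : ℤ) + 1 - (i : ℤ) : ℤ) : ZMod p)

/-- The removable node in row `r` is normal (signature rule): for every `u < r` the
number of addable nodes of the same residue in rows `[u, r)` is at most the number of
removable nodes of the same residue in rows `(u, r)`. -/
def Normal (p : ℕ) (l : Ptn) (r : ℕ) : Prop :=
  l.Removable r ∧ ∀ u, 1 ≤ u → u < r →
    ((Finset.Ico u r).filter (fun i => l.Addable i ∧ l.addRes p i = l.remRes p r)).card ≤
    ((Finset.Ioo u r).filter (fun i => l.Removable i ∧ l.remRes p i = l.remRes p r)).card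

/-- A good node is the highest normal node of its residue. -/
def Good (p : ℕ) (l : Ptn) (r : ℕ) : Prop :=
  l.Normal p r ∧ ∀ r', l.Normal p r' → l.remRes p r' = l.remRes p r → r ≤ r'

end Ptn

/-- Dominance order on part-functions: all partial sums of `f` dominate those of `g`. -/
def Dominates (f g : ℕ → ℕ) : Prop :=
  ∀ i, ∑ j ∈ Finset.Icc 1 i, g j ≤ ∑ j ∈ Finset.Icc 1 i, f j

/-- Remove one node from row `r`. -/
def removeAt (f : ℕ → ℕ) (r : ℕ) : ℕ → ℕ := fun i => if i = r then f i - 1 else f i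

/-- The canonical beta-set of a partition: `n` is a bead iff `n = λ_i - i` for some `i ≥ 1`. -/
def Beta (l : Ptn) (n : ℤ) : Prop := ∃ i : ℕ, 1 ≤ i ∧ (l.part i : ℤ) - (i : ℤ) = n

/-- `m` is obtained from `l` by removing one rim `p`-hook (moving a bead of the canonical
beta-set up by `p`). -/
def RemoveHook (p : ℕ) (l m : Ptn) : Prop :=
  ∃ a : ℤ, Beta l a ∧ ¬ Beta l (a - p) ∧
    ∀ n : ℤ, Beta m n ↔ (n ≠ a ∧ (n = a - (p : ℤ) ∨ Beta l n))

/-- A partition with no rim `p`-hook. -/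
def IsPCore (p : ℕ) (c : Ptn) : Prop := ¬ ∃ m, RemoveHook p c m

/-- `c` is the `p`-core of `l`. -/
def PCore (p : ℕ) (l c : Ptn) : Prop :=
  Relation.ReflTransGen (RemoveHook p) l c ∧ IsPCore p c

/-- The `p`-core of `l` is empty. -/
def EmptyCore (p : ℕ) (l : Ptn) : Prop :=
  ∃ c : Ptn, PCore p l c ∧ ∀ i, 1 ≤ i → c.part i = 0

/-- An abacus: eventually beads (`true`) to the left and spaces (`false`) to the right. -/
structure Abacus where
  f : ℤ → Bool
  low : ∃ N : ℤ, ∀ n, n ≤ N → f n = true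
  high : ∃ N : ℤ, ∀ n, N ≤ n → f n = false

/-- The abacus `Λ` displays the part-function `l`: if `a 1 > a 2 > ⋯` enumerates the
beads of `Λ`, then `l i` is the number of spaces below the `i`-th bead. -/
def Displays (Λ : Abacus) (l : ℕ → ℕ) : Prop :=
  ∃ a : ℕ → ℤ,
    (∀ i, 1 ≤ i → a (i + 1) < a i) ∧
    (∀ n : ℤ, Λ.f n = true ↔ ∃ i, 1 ≤ i ∧ a i = n) ∧
    (∀ i, 1 ≤ i → l i = Set.ncard {n : ℤ | n ≤ a i ∧ Λ.f n = false})

namespace CS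

lemma cast_eq_iff_dvd (p : ℕ) (a b : ℤ) : ((a : ZMod p) = (b : ZMod p)) ↔ (p : ℤ) ∣ (b - a) := by
  rw [ZMod.intCast_eq_intCast_iff, Int.modEq_iff_dvd]

end CS
namespace CS

lemma height_zero (l : Ptn) (i : ℕ) (hi : 1 ≤ i) (hlt : l.height < i) : l.part i = 0 := by
  by_contra hne
  obtain ⟨N, hN⟩ := l.eventually_zero
  have hb : BddAbove {i | 1 ≤ i ∧ l.part i ≠ 0} := by
    refine ⟨N, fun x hx => ?_⟩
    by_contra hxN
    exact hx.2 (hN x (by omega))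
  have := le_csSup hb (show i ∈ {i | 1 ≤ i ∧ l.part i ≠ 0} from ⟨hi, hne⟩)
  unfold Ptn.height at hlt
  omega

lemma height_mem (l : Ptn) (h1 : l.part 1 ≠ 0) : 1 ≤ l.height ∧ l.part l.height ≠ 0 := by
  obtain ⟨N, hN⟩ := l.eventually_zero
  have hb : BddAbove {i | 1 ≤ i ∧ l.part i ≠ 0} := by
    refine ⟨N, fun x hx => ?_⟩
    by_contra hxN
    exact hx.2 (hN x (by omega))
  have := Nat.sSup_mem (s := {i | 1 ≤ i ∧ l.part i ≠ 0}) ⟨1, le_refl 1, h1⟩ hb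
  exact this

end CS
namespace CS

def Pset (l : Ptn) : Set ℤ := {n | 0 ≤ n ∧ Beta l n}
def Mset (l : Ptn) : Set ℤ := {n | n < 0 ∧ ¬ Beta l n}

lemma Pset_finite (l : Ptn) : (Pset l).Finite := by
  apply Set.Finite.subset (Set.finite_Icc (0 : ℤ) (l.part 1 : ℤ))
  rintro n ⟨hn, i, hi, hin⟩
  have := l.antitone (le_refl 1) hi
  simp only [Set.mem_Icc]
  omega

lemma Mset_finite (l : Ptn) : (Mset l).Finite := by
  obtain ⟨N, hN⟩ := l.eventually_zero
  apply Set.Finite.subset (Set.finite_Icc (-(N : ℤ) - 1) 0)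
  rintro n ⟨hn, hnb⟩
  simp only [Set.mem_Icc]
  constructor
  · by_contra hlt
    push_neg at hlt
    refine hnb ⟨(-n).toNat, by omega, ?_⟩
    have := hN (-n).toNat (by omega)
    omega
  · omega

def Inv (p : ℕ) (l : Ptn) : Prop :=
  ∀ j : ZMod p, (Pset l ∩ {n : ℤ | (n : ZMod p) = j}).ncard
              = (Mset l ∩ {n : ℤ | (n : ZMod p) = j}).ncard

end CS
namespace CS

lemma inv_of_hook {p : ℕ} (hp : 0 < p) {l m : Ptn} (hlm : RemoveHook p l m)
    (hm : Inv p m) : Inv p l := by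
  obtain ⟨α, hα, hαp, hchar⟩ := hlm
  intro j
  have hcast : ((α - (p : ℤ) : ℤ) : ZMod p) = (α : ZMod p) := by
    push_cast
    simp [ZMod.natCast_self]
  by_cases hj : (α : ZMod p) = j
  · -- the moved bead lives on runner j
    have hαpC : ((α - (p : ℤ) : ℤ) : ZMod p) = j := by rw [hcast, hj]
    have hPfin : (Pset l ∩ {n : ℤ | (n : ZMod p) = j}).Finite :=
      (Pset_finite l).inter_of_left _
    have hMfin : (Mset l ∩ {n : ℤ | (n : ZMod p) = j}).Finite :=
      (Mset_finite l).inter_of_left _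
    rcases le_or_gt 0 (α - (p : ℤ)) with hge | hlt
    · -- both α and α - p are ≥ 0
      have hPm : Pset m ∩ {n : ℤ | (n : ZMod p) = j}
          = insert (α - (p : ℤ)) ((Pset l ∩ {n : ℤ | (n : ZMod p) = j}) \ {α}) := by
        ext n
        simp only [Set.mem_inter_iff, Set.mem_setOf_eq, Set.mem_insert_iff,
          Set.mem_diff, Set.mem_singleton_iff, Pset, hchar n]
        constructor
        · rintro ⟨⟨hn0, hne, hor⟩, hnj⟩
          rcases hor with h1 | h2
          · exact Or.inl h1
          · exact Or.inr ⟨⟨⟨hn0, h2⟩, hnj⟩, hne⟩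
        · rintro (rfl | ⟨⟨⟨hn0, hB⟩, hnj⟩, hne⟩)
          · exact ⟨⟨hge, by omega, Or.inl rfl⟩, hαpC⟩
          · exact ⟨⟨hn0, hne, Or.inr hB⟩, hnj⟩
      have hMm : Mset m ∩ {n : ℤ | (n : ZMod p) = j}
          = Mset l ∩ {n : ℤ | (n : ZMod p) = j} := by
        ext n
        simp only [Set.mem_inter_iff, Set.mem_setOf_eq, Mset, hchar n]
        constructor
        · rintro ⟨⟨hn0, hB⟩, hnj⟩
          refine ⟨⟨hn0, fun hBl => hB ⟨by omega, Or.inr hBl⟩⟩, hnj⟩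
        · rintro ⟨⟨hn0, hB⟩, hnj⟩
          refine ⟨⟨hn0, fun hBm => ?_⟩, hnj⟩
          rcases hBm.2 with h1 | h2
          · omega
          · exact hB h2
      have hmemα : α ∈ Pset l ∩ {n : ℤ | (n : ZMod p) = j} := ⟨⟨by omega, hα⟩, hj⟩
      have hnotmem : (α - (p : ℤ)) ∉ (Pset l ∩ {n : ℤ | (n : ZMod p) = j}) \ {α} := by
        rintro ⟨⟨⟨_, hB⟩, _⟩, _⟩
        exact hαp hB
      have := hm j
      rw [hPm, hMm] at this
      rw [Set.ncard_insert_of_notMem hnotmem hPfin.diff] at this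
      rw [← Set.ncard_diff_singleton_add_one hmemα hPfin]
      omega
    · rcases le_or_gt 0 α with hα0 | hαneg
      · -- α ≥ 0 > α - p
        have hPm : Pset m ∩ {n : ℤ | (n : ZMod p) = j}
            = (Pset l ∩ {n : ℤ | (n : ZMod p) = j}) \ {α} := by
          ext n
          simp only [Set.mem_inter_iff, Set.mem_setOf_eq, Set.mem_diff,
            Set.mem_singleton_iff, Pset, hchar n]
          constructor
          · rintro ⟨⟨hn0, hne, hor⟩, hnj⟩
            rcases hor with h1 | h2
            · omega
            · exact ⟨⟨⟨hn0, h2⟩, hnj⟩, hne⟩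
          · rintro ⟨⟨⟨hn0, hB⟩, hnj⟩, hne⟩
            exact ⟨⟨hn0, hne, Or.inr hB⟩, hnj⟩
        have hMm : Mset m ∩ {n : ℤ | (n : ZMod p) = j}
            = (Mset l ∩ {n : ℤ | (n : ZMod p) = j}) \ {α - (p : ℤ)} := by
          ext n
          simp only [Set.mem_inter_iff, Set.mem_setOf_eq, Set.mem_diff,
            Set.mem_singleton_iff, Mset, hchar n]
          constructor
          · rintro ⟨⟨hn0, hB⟩, hnj⟩
            refine ⟨⟨⟨hn0, fun hBl => hB ⟨by omega, Or.inr hBl⟩⟩, hnj⟩, fun hne => ?_⟩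
            exact hB ⟨by omega, Or.inl hne⟩
          · rintro ⟨⟨⟨hn0, hB⟩, hnj⟩, hne⟩
            refine ⟨⟨hn0, fun hBm => ?_⟩, hnj⟩
            rcases hBm.2 with h1 | h2
            · exact hne h1
            · exact hB h2
        have hmemα : α ∈ Pset l ∩ {n : ℤ | (n : ZMod p) = j} := ⟨⟨hα0, hα⟩, hj⟩
        have hmemαp : α - (p : ℤ) ∈ Mset l ∩ {n : ℤ | (n : ZMod p) = j} :=
          ⟨⟨hlt, hαp⟩, hαpC⟩
        have := hm j
        rw [hPm, hMm] at this
        have e1 := Set.ncard_diff_singleton_add_one hmemα hPfin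
        have e2 := Set.ncard_diff_singleton_add_one hmemαp hMfin
        omega
      · -- α < 0
        have hPm : Pset m ∩ {n : ℤ | (n : ZMod p) = j}
            = Pset l ∩ {n : ℤ | (n : ZMod p) = j} := by
          ext n
          simp only [Set.mem_inter_iff, Set.mem_setOf_eq, Pset, hchar n]
          constructor
          · rintro ⟨⟨hn0, hne, hor⟩, hnj⟩
            rcases hor with h1 | h2
            · omega
            · exact ⟨⟨hn0, h2⟩, hnj⟩
          · rintro ⟨⟨hn0, hB⟩, hnj⟩
            exact ⟨⟨hn0, by omega, Or.inr hB⟩, hnj⟩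
        have hMm : Mset m ∩ {n : ℤ | (n : ZMod p) = j}
            = insert α ((Mset l ∩ {n : ℤ | (n : ZMod p) = j}) \ {α - (p : ℤ)}) := by
          ext n
          simp only [Set.mem_inter_iff, Set.mem_setOf_eq, Set.mem_insert_iff,
            Set.mem_diff, Set.mem_singleton_iff, Mset, hchar n]
          constructor
          · rintro ⟨⟨hn0, hB⟩, hnj⟩
            by_cases hne : n = α
            · exact Or.inl hne
            · refine Or.inr ⟨⟨⟨hn0, fun hBl => hB ⟨hne, Or.inr hBl⟩⟩, hnj⟩, fun h1 => ?_⟩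
              exact hB ⟨hne, Or.inl h1⟩
          · rintro (rfl | ⟨⟨⟨hn0, hB⟩, hnj⟩, hne⟩)
            · exact ⟨⟨hαneg, fun hBm => hBm.1 rfl⟩, hj⟩
            · refine ⟨⟨hn0, fun hBm => ?_⟩, hnj⟩
              rcases hBm.2 with h1 | h2
              · exact hne h1
              · exact hB h2
        have hmemαp : α - (p : ℤ) ∈ Mset l ∩ {n : ℤ | (n : ZMod p) = j} :=
          ⟨⟨hlt, hαp⟩, hαpC⟩
        have hnotmem : α ∉ (Mset l ∩ {n : ℤ | (n : ZMod p) = j}) \ {α - (p : ℤ)} := by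
          rintro ⟨⟨⟨_, hB⟩, _⟩, _⟩
          exact hB hα
        have := hm j
        rw [hPm, hMm] at this
        rw [Set.ncard_insert_of_notMem hnotmem hMfin.diff] at this
        have e2 := Set.ncard_diff_singleton_add_one hmemαp hMfin
        omega
  · -- runner untouched
    have hPm : Pset m ∩ {n : ℤ | (n : ZMod p) = j} = Pset l ∩ {n : ℤ | (n : ZMod p) = j} := by
      ext n
      simp only [Set.mem_inter_iff, Set.mem_setOf_eq, Pset, hchar n]
      constructor
      · rintro ⟨⟨hn0, hne, hor⟩, hnj⟩
        rcases hor with h1 | h2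
        · exfalso; apply hj; rw [← hcast, ← h1, hnj]
        · exact ⟨⟨hn0, h2⟩, hnj⟩
      · rintro ⟨⟨hn0, hB⟩, hnj⟩
        refine ⟨⟨hn0, fun hne => hj (by rw [← hne, hnj]), Or.inr hB⟩, hnj⟩
    have hMm : Mset m ∩ {n : ℤ | (n : ZMod p) = j} = Mset l ∩ {n : ℤ | (n : ZMod p) = j} := by
      ext n
      simp only [Set.mem_inter_iff, Set.mem_setOf_eq, Mset, hchar n]
      constructor
      · rintro ⟨⟨hn0, hB⟩, hnj⟩
        refine ⟨⟨hn0, fun hBl => hB ⟨fun hne => hj (by rw [← hne, hnj]), Or.inr hBl⟩⟩, hnj⟩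
      · rintro ⟨⟨hn0, hB⟩, hnj⟩
        refine ⟨⟨hn0, fun hBm => ?_⟩, hnj⟩
        rcases hBm.2 with h1 | h2
        · exact hj (by rw [← hcast, ← h1, hnj])
        · exact hB h2
    rw [← hPm, ← hMm]
    exact hm j

end CS
namespace CS

lemma inv_of_chain {p : ℕ} (hp : 0 < p) {l c : Ptn}
    (h : Relation.ReflTransGen (RemoveHook p) l c) (hc : Inv p c) : Inv p l := by
  induction h using Relation.ReflTransGen.head_induction_on with
  | refl => exact hc
  | head hstep _ ih => exact inv_of_hook hp hstep ih

lemma inv_of_emptyCore {p : ℕ} (hp : 0 < p) {l : Ptn} (h : EmptyCore p l) : Inv p l := by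
  obtain ⟨c, ⟨hchain, _⟩, hc0⟩ := h
  refine inv_of_chain hp hchain ?_
  have hbeta : ∀ n : ℤ, Beta c n ↔ n < 0 := by
    intro n
    constructor
    · rintro ⟨i, hi, hin⟩
      have := hc0 i hi
      omega
    · intro hn
      refine ⟨(-n).toNat, by omega, ?_⟩
      rw [hc0 (-n).toNat (by omega)]
      omega
  intro j
  have hP : Pset c = ∅ := by
    ext n; simp only [Pset, Set.mem_setOf_eq, Set.mem_empty_iff_false, iff_false, not_and]
    intro h0 hB; rw [hbeta] at hB; omega
  have hM : Mset c = ∅ := by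
    ext n; simp only [Mset, Set.mem_setOf_eq, Set.mem_empty_iff_false, iff_false, not_and]
    intro h0 hB; exact hB ((hbeta n).mpr h0)
  rw [hP, hM]

lemma nonempty_iff_of_inv {s t : Set ℤ} (hs : s.Finite) (ht : t.Finite)
    (h : s.ncard = t.ncard) : s.Nonempty ↔ t.Nonempty := by
  rw [← Set.ncard_pos hs, ← Set.ncard_pos ht, h]

lemma run_start {p : ℕ} (h : ℕ) (hh0 : 0 < h) (hhp : h < p) (s t : ℤ)
    (H : ∀ j : ZMod p, (∃ m : ℤ, m ∈ Set.Icc s (s + h - 1) ∧ (m : ZMod p) = j) ↔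
         (∃ m : ℤ, m ∈ Set.Icc t (t + h - 1) ∧ (m : ZMod p) = j)) :
    (p : ℤ) ∣ s - t := by
  obtain ⟨m₀, hm₀, hres⟩ := (H ((s : ℤ) : ZMod p)).mp
    ⟨s, Set.mem_Icc.mpr (by omega), rfl⟩
  rw [Set.mem_Icc] at hm₀
  have hdvd : (p : ℤ) ∣ s - m₀ := (cast_eq_iff_dvd p m₀ s).mp hres
  by_cases hm : m₀ = t
  · rw [← hm]; exact hdvd
  · exfalso
    obtain ⟨m₁, hm₁, hres₁⟩ := (H ((s - 1 : ℤ) : ZMod p)).mpr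
      ⟨m₀ - 1, Set.mem_Icc.mpr (by omega), by
        rw [cast_eq_iff_dvd]
        have : s - 1 - (m₀ - 1) = s - m₀ := by ring
        rw [this]; exact hdvd⟩
    rw [Set.mem_Icc] at hm₁
    have hdvd₁ : (p : ℤ) ∣ (s - 1) - m₁ := (cast_eq_iff_dvd p m₁ (s - 1)).mp hres₁
    have hdvd₂ : (p : ℤ) ∣ m₁ - s + 1 := by
      have : m₁ - s + 1 = -((s - 1) - m₁) := by ring
      rw [this]; exact hdvd₁.neg_right
    have := Int.le_of_dvd (by omega) hdvd₂
    omega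

end CS
namespace CS

lemma ncard_Icc (a b : ℤ) : (Set.Icc a b).ncard = (b + 1 - a).toNat := by
  rw [← Finset.coe_Icc, Set.ncard_coe_finset, Int.card_Icc]

lemma ncard_Icc_union (a b c d : ℤ) (hbc : b < c) :
    (Set.Icc a b ∪ Set.Icc c d).ncard = (b + 1 - a).toNat + (d + 1 - c).toNat := by
  rw [Set.ncard_union_eq ?_ (Set.finite_Icc a b) (Set.finite_Icc c d), ncard_Icc, ncard_Icc]
  rw [Set.disjoint_left]
  intro n hn hn'
  rw [Set.mem_Icc] at hn hn'
  omega

end CS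

/-- A partition with height `< p`, empty `p`-core, all normal nodes of one residue,
`χ(λ) = p`, and all core-normal residues equal to the bottom removable residue, is of
the form `λ^{(H,x)}` with `1 < H < p`, `H ∤ x`. -/
theorem stmt10 (p : ℕ) (hp : 0 < p) (l : Ptn)
    (hh : l.height < p)
    (hcore : EmptyCore p l)
    (hres : ∀ r s, l.Normal p r → l.Normal p s → l.remRes p r = l.remRes p s)
    (hchi : (l.part 1 : ℤ) - (l.part l.height : ℤ) + (l.height : ℤ) = (p : ℤ))
    (hcoreres : ∀ c : Ptn, PCore p l c → ∀ s, c.Normal p s →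
      c.remRes p s = l.remRes p l.height) :
    ∃ H x : ℕ, 1 < H ∧ H < p ∧ ¬ H ∣ x ∧
      ∃ Λ : Abacus, Displays Λ l.part ∧
        ∀ n : ℤ, Λ.f n = true ↔
          (n < 0 ∨
           ((((x / H + 1) * p : ℕ) : ℤ) ≤ n ∧ n < (((x / H + 1) * p + x % H : ℕ) : ℤ)) ∨
           ((((x / H) * p + x % H : ℕ) : ℤ) ≤ n ∧ n < (((x / H) * p + H : ℕ) : ℤ))) := by
  classical
  -- basic facts about the height
  have hpart1 : l.part 1 ≠ 0 := by
    intro h0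
    have hallz : ∀ i, 1 ≤ i → l.part i = 0 := by
      intro i hi
      have := l.antitone (le_refl 1) hi
      omega
    have hht : l.height = 0 := by
      unfold Ptn.height
      rw [show {i | 1 ≤ i ∧ l.part i ≠ 0} = (∅ : Set ℕ) from ?_]
      · exact csSup_empty
      ext i
      simp only [Set.mem_setOf_eq, Set.mem_empty_iff_false, iff_false, not_and, ne_eq,
        not_not]
      intro hi
      exact hallz i hi
    rw [hht] at hchi
    simp only [Nat.cast_zero] at hchi
    have : (0 : ℤ) ≤ (l.part 0 : ℤ) := Int.natCast_nonneg _
    omega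
  obtain ⟨hh1, hph⟩ := CS.height_mem l hpart1
  have hzero : ∀ i, l.height < i → l.part i = 0 := fun i hi =>
    CS.height_zero l i (by omega) hi
  have h2 : 2 ≤ l.height := by
    rcases Nat.lt_or_ge l.height 2 with hc | hc
    · exfalso
      have : l.height = 1 := by omega
      rw [this] at hchi hh
      simp at hchi
      omega
    · exact hc
  -- strict decrease of beta numbers
  have sdec : ∀ i j : ℕ, 1 ≤ i → i < j → (l.part j : ℤ) - j < (l.part i : ℤ) - i := by
    intro i j hi hij
    have := l.antitone hi (le_of_lt hij)
    omega
  -- step 1: every removable row above the bottom is normal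
  have N1 : ∀ r, 1 ≤ r → r < l.height → l.Removable r → l.Normal p r := by
    intro r hr1 hrh hrem
    refine ⟨hrem, fun u hu hur => ?_⟩
    have hempty : ((Finset.Ico u r).filter
        (fun i => l.Addable i ∧ l.addRes p i = l.remRes p r)) = ∅ := by
      rw [Finset.filter_eq_empty_iff]
      intro i hi
      rw [Finset.mem_Ico] at hi
      rintro ⟨-, hres'⟩
      rw [Ptn.addRes, Ptn.remRes, CS.cast_eq_iff_dvd] at hres'
      have hle : l.part r ≤ l.part i := l.antitone (by omega) (by omega)
      have hub : (l.part i : ℤ) - i ≤ (l.part 1 : ℤ) - 1 := by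
        have := l.antitone (le_refl 1) (show 1 ≤ i by omega)
        omega
      have hlb := sdec r l.height (by omega) hrh
      have hd : (p : ℤ) ∣ ((l.part i : ℤ) + 1 - i - ((l.part r : ℤ) - r)) := by
        have := dvd_neg.mpr hres'
        rw [show -(((l.part r : ℤ) - r) - ((l.part i : ℤ) + 1 - i))
          = ((l.part i : ℤ) + 1 - i - ((l.part r : ℤ) - r)) by ring] at this
        exact this
      have := Int.le_of_dvd (by omega) hd
      omega
    rw [hempty]
    simp
  -- step 2: the bottom row is not normal
  have N2 : ¬ l.Normal p l.height := by
    rintro ⟨hrem, hsig⟩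
    have h12 := hsig 1 (le_refl 1) (by omega)
    have hA : 1 ∈ (Finset.Ico 1 l.height).filter
        (fun i => l.Addable i ∧ l.addRes p i = l.remRes p l.height) := by
      rw [Finset.mem_filter, Finset.mem_Ico]
      refine ⟨⟨le_refl 1, by omega⟩, Or.inl rfl, ?_⟩
      rw [Ptn.addRes, Ptn.remRes, CS.cast_eq_iff_dvd]
      exact ⟨-1, by push_cast; omega⟩
    have hR : ((Finset.Ioo 1 l.height).filter
        (fun i => l.Removable i ∧ l.remRes p i = l.remRes p l.height)) = ∅ := by
      rw [Finset.filter_eq_empty_iff]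
      intro i hi
      rw [Finset.mem_Ioo] at hi
      rintro ⟨-, hres'⟩
      rw [Ptn.remRes, Ptn.remRes, CS.cast_eq_iff_dvd] at hres'
      have hub : (l.part i : ℤ) - i ≤ (l.part 2 : ℤ) - 2 := by
        have h1 := l.antitone (show (1:ℕ) ≤ 2 by omega) (show 2 ≤ i by omega)
        omega
      have hub2 : (l.part 2 : ℤ) ≤ (l.part 1 : ℤ) := by
        have := l.antitone (le_refl 1) (show (1:ℕ) ≤ 2 by omega)
        omega
      have hlb := sdec i l.height (by omega) hi.2
      have hd : (p : ℤ) ∣ ((l.part i : ℤ) - i - ((l.part l.height : ℤ) - l.height)) := by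
        have := dvd_neg.mpr hres'
        rw [show -(((l.part l.height : ℤ) - l.height) - ((l.part i : ℤ) - i))
          = ((l.part i : ℤ) - i - ((l.part l.height : ℤ) - l.height)) by ring] at this
        exact this
      have := Int.le_of_dvd (by omega) hd
      omega
    rw [hR] at h12
    simp only [Finset.card_empty, Nat.le_zero, Finset.card_eq_zero] at h12
    rw [h12] at hA
    exact absurd hA (Finset.notMem_empty 1)
  -- step 3: there is a removable row above the bottom
  have hexist : ∃ r, 1 ≤ r ∧ r < l.height ∧ l.Removable r := by
    by_contra hno
    push_neg at hno
    have hconst : ∀ i, 1 ≤ i → i ≤ l.height → l.part i = l.part 1 := by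
      intro i
      induction i with
      | zero => omega
      | succ k ih =>
        intro h1k hkh
        rcases Nat.lt_or_ge 1 (k + 1) with hk1 | hk1
        · have hk : 1 ≤ k := by omega
          have hknr := hno k hk (by omega)
          rw [Ptn.Removable] at hknr
          push_neg at hknr
          have h1 := hknr hk
          have h2 := l.antitone hk (show k ≤ k + 1 by omega)
          have h3 := ih hk (by omega)
          omega
        · have hk0 : k = 0 := by omega
          subst hk0
          rfl
    have := hconst l.height hh1 (le_refl _)
    rw [this] at hchi
    omega
  obtain ⟨r₀, hr01, hr0h, hr0rem⟩ := hexist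
  -- step 4: it is unique
  have huniq : ∀ r, 1 ≤ r → r < l.height → l.Removable r → r = r₀ := by
    intro r hr1 hrh hrem
    by_contra hne
    have hN1 := N1 r hr1 hrh hrem
    have hN2 := N1 r₀ hr01 hr0h hr0rem
    have heq := hres r r₀ hN1 hN2
    rw [Ptn.remRes, Ptn.remRes, CS.cast_eq_iff_dvd] at heq
    have hub1 : (l.part r : ℤ) - r ≤ (l.part 1 : ℤ) - 1 := by
      have := l.antitone (le_refl 1) hr1
      omega
    have hub2 : (l.part r₀ : ℤ) - r₀ ≤ (l.part 1 : ℤ) - 1 := by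
      have := l.antitone (le_refl 1) hr01
      omega
    have hlb1 := sdec r l.height hr1 hrh
    have hlb2 := sdec r₀ l.height hr01 hr0h
    rcases Nat.lt_or_ge r r₀ with hlt | hge
    · have hs := sdec r r₀ hr1 hlt
      have hd : (p : ℤ) ∣ ((l.part r : ℤ) - r - ((l.part r₀ : ℤ) - r₀)) := by
        have := dvd_neg.mpr heq
        rw [show -(((l.part r₀ : ℤ) - r₀) - ((l.part r : ℤ) - r))
          = ((l.part r : ℤ) - r - ((l.part r₀ : ℤ) - r₀)) by ring] at this
        exact this
      have := Int.le_of_dvd (by omega) hd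
      omega
    · have hlt : r₀ < r := by omega
      have hs := sdec r₀ r hr01 hlt
      have := Int.le_of_dvd (by omega) heq
      omega
  -- step 5: the two-step shape
  have hshape1 : ∀ i, 1 ≤ i → i ≤ r₀ → l.part i = l.part 1 := by
    intro i
    induction i with
    | zero => omega
    | succ k ih =>
      intro h1k hkh
      rcases Nat.lt_or_ge 1 (k + 1) with hk1 | hk1
      · have hk : 1 ≤ k := by omega
        have hknr : ¬ l.Removable k := by
          intro hc
          have := huniq k hk (by omega) hc
          omega
        rw [Ptn.Removable] at hknr
        push_neg at hknr
        have h1 := hknr hk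
        have h2 := l.antitone hk (show k ≤ k + 1 by omega)
        have h3 := ih hk (by omega)
        omega
      · have hk0 : k = 0 := by omega
        subst hk0
        rfl
  have hstep2 : ∀ d i, r₀ < i → i + d = l.height → l.part i = l.part l.height := by
    intro d
    induction d with
    | zero =>
      intro i _ hieq
      rw [show i = l.height by omega]
    | succ k ih =>
      intro i hi hieq
      have hih := ih (i + 1) (by omega) (by omega)
      have hinr : ¬ l.Removable i := by
        intro hc
        have := huniq i (by omega) (by omega) hc
        omega
      rw [Ptn.Removable] at hinr
      push_neg at hinr
      have h1 := hinr (by omega)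
      have h2 := l.antitone (show 1 ≤ i by omega) (show i ≤ i + 1 by omega)
      omega
  have hshape2 : ∀ i, r₀ < i → i ≤ l.height → l.part i = l.part l.height := by
    intro i hi hih
    exact hstep2 (l.height - i) i hi (by omega)
  set b := l.part l.height with hbdef
  have hb1 : 1 ≤ b := by omega
  have haa : (l.part 1 : ℤ) = (b : ℤ) + p - l.height := by omega
  -- step 6: characterization of the beta-set
  have hBeta : ∀ n : ℤ, Beta l n ↔
      (((b : ℤ) + p - l.height - r₀ ≤ n ∧ n ≤ (b : ℤ) + p - l.height - 1) ∨
       ((b : ℤ) - l.height ≤ n ∧ n ≤ (b : ℤ) - r₀ - 1) ∨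
       n ≤ -(l.height : ℤ) - 1) := by
    intro n
    constructor
    · rintro ⟨i, hi, hin⟩
      rcases le_or_gt i r₀ with h1 | h1
      · have := hshape1 i hi h1
        left
        omega
      · rcases le_or_gt i l.height with h2 | h2
        · have := hshape2 i h1 h2
          right; left
          omega
        · have := hzero i h2
          right; right
          omega
    · rintro (⟨h1', h2'⟩ | ⟨h1', h2'⟩ | h1')
      · refine ⟨((l.part 1 : ℤ) - n).toNat, by omega, ?_⟩
        have hi1 : 1 ≤ ((l.part 1 : ℤ) - n).toNat := by omega
        have hi2 : ((l.part 1 : ℤ) - n).toNat ≤ r₀ := by omega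
        rw [hshape1 _ hi1 hi2]
        omega
      · refine ⟨((b : ℤ) - n).toNat, by omega, ?_⟩
        have hi1 : r₀ < ((b : ℤ) - n).toNat := by omega
        have hi2 : ((b : ℤ) - n).toNat ≤ l.height := by omega
        rw [hshape2 _ hi1 hi2]
        omega
      · refine ⟨(-n).toNat, by omega, ?_⟩
        rw [hzero (-n).toNat (by omega)]
        omega
  -- step 7: the runner-count invariant from the empty core
  have hinv : CS.Inv p l := CS.inv_of_emptyCore hp hcore
  have hkey : ∀ j : ZMod p,
      (CS.Pset l ∩ {n : ℤ | (n : ZMod p) = j}).Nonempty ↔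
      (CS.Mset l ∩ {n : ℤ | (n : ZMod p) = j}).Nonempty := by
    intro j
    exact CS.nonempty_iff_of_inv ((CS.Pset_finite l).inter_of_left _)
      ((CS.Mset_finite l).inter_of_left _) (hinv j)
  -- step 8: residue sets of the bead run and of the removed run agree
  have hclaimE : ∀ j : ZMod p,
      (∃ m : ℤ, m ∈ Set.Icc ((b : ℤ) - r₀ - l.height) ((b : ℤ) - r₀ - l.height + l.height - 1)
        ∧ (m : ZMod p) = j) ↔
      (∃ m : ℤ, m ∈ Set.Icc (-(l.height : ℤ)) (-(l.height : ℤ) + l.height - 1)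
        ∧ (m : ZMod p) = j) := by
    have hshift : ∀ m : ℤ, (((m + (p : ℤ)) : ℤ) : ZMod p) = (m : ZMod p) := by
      intro m
      push_cast
      simp
    have hbead : ∀ j : ZMod p,
        (∃ n : ℤ, (((b : ℤ) + p - l.height - r₀ ≤ n ∧ n ≤ (b : ℤ) + p - l.height - 1) ∨
          ((b : ℤ) - l.height ≤ n ∧ n ≤ (b : ℤ) - r₀ - 1)) ∧ (n : ZMod p) = j) ↔
        (∃ m : ℤ, (-(l.height : ℤ) ≤ m ∧ m ≤ -1) ∧ (m : ZMod p) = j) := by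
      intro j
      constructor
      · rintro ⟨n, hrun, hresj⟩
        rcases le_or_gt 0 n with hn0 | hn0
        · have hPmem : n ∈ CS.Pset l ∩ {n : ℤ | (n : ZMod p) = j} :=
            ⟨⟨hn0, (hBeta n).mpr (by tauto)⟩, hresj⟩
          obtain ⟨m, ⟨⟨hm0, hmB⟩, hmres⟩⟩ := (hkey j).mp ⟨n, hPmem⟩
          rw [hBeta m] at hmB
          push_neg at hmB
          exact ⟨m, ⟨by omega, by omega⟩, hmres⟩
        · exact ⟨n, ⟨by omega, by omega⟩, hresj⟩
      · rintro ⟨m, ⟨hm1, hm2⟩, hresj⟩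
        by_cases hB : Beta l m
        · rw [hBeta m] at hB
          exact ⟨m, by omega, hresj⟩
        · have hMmem : m ∈ CS.Mset l ∩ {n : ℤ | (n : ZMod p) = j} :=
            ⟨⟨by omega, hB⟩, hresj⟩
          obtain ⟨n, ⟨⟨hn0, hnB⟩, hnres⟩⟩ := (hkey j).mpr ⟨m, hMmem⟩
          rw [hBeta n] at hnB
          exact ⟨n, by omega, hnres⟩
    intro j
    constructor
    · rintro ⟨m, hm, hresj⟩
      rw [Set.mem_Icc] at hm
      have : ∃ n : ℤ, (((b : ℤ) + p - l.height - r₀ ≤ n ∧ n ≤ (b : ℤ) + p - l.height - 1) ∨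
          ((b : ℤ) - l.height ≤ n ∧ n ≤ (b : ℤ) - r₀ - 1)) ∧ (n : ZMod p) = j := by
        rcases le_or_gt m ((b : ℤ) - l.height - 1) with hc | hc
        · exact ⟨m + p, Or.inl (by omega), by rw [hshift m]; exact hresj⟩
        · exact ⟨m, Or.inr (by omega), hresj⟩
      obtain ⟨m', hm', hres'⟩ := (hbead j).mp this
      exact ⟨m', Set.mem_Icc.mpr (by omega), hres'⟩
    · rintro ⟨m, hm, hresj⟩
      rw [Set.mem_Icc] at hm
      obtain ⟨n, hrun, hres'⟩ := (hbead j).mpr ⟨m, ⟨by omega, by omega⟩, hresj⟩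
      rcases hrun with h1 | h1
      · refine ⟨n - p, Set.mem_Icc.mpr (by omega), ?_⟩
        rw [← hres', ← hshift (n - p)]
        norm_num
      · exact ⟨n, Set.mem_Icc.mpr (by omega), hres'⟩
  -- step 9: conclude the congruence b ≡ r₀ (mod p)
  have hdvd : (p : ℤ) ∣ (b : ℤ) - r₀ := by
    have := CS.run_start l.height (by omega) hh ((b : ℤ) - r₀ - l.height)
      (-(l.height : ℤ)) hclaimE
    have e : (b : ℤ) - r₀ - l.height - -(l.height : ℤ) = (b : ℤ) - r₀ := by ring
    rwa [e] at this
  -- step 10: extract q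
  have hbr : r₀ ≤ b := by
    by_contra hc
    push_neg at hc
    have h1 : (p : ℤ) ∣ (r₀ : ℤ) - b := by
      have := dvd_neg.mpr hdvd
      rwa [neg_sub] at this
    have h2 := Int.le_of_dvd (by omega) h1
    omega
  obtain ⟨z, hz⟩ := hdvd
  have hz0 : 0 ≤ z := by
    by_contra hc
    push_neg at hc
    have h1 : (p : ℤ) * z ≤ (p : ℤ) * (-1) := by
      apply mul_le_mul_of_nonneg_left (by omega) (by positivity)
    omega
  set q := z.toNat with hqdef
  have hqz : (q : ℤ) = z := Int.toNat_of_nonneg hz0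
  have hqpz : (q : ℤ) * (p : ℤ) = (b : ℤ) - r₀ := by rw [hqz]; linarith [hz]
  have hqp : q * p + r₀ = b := by
    have : ((q * p + r₀ : ℕ) : ℤ) = (b : ℤ) := by push_cast; linarith [hqpz]
    exact_mod_cast this
    -- division facts for x = q * height + r₀
  have hH0 : 0 < l.height := by omega
  have hxdiv : (q * l.height + r₀) / l.height = q := by
    rw [show q * l.height + r₀ = l.height * q + r₀ by ring, Nat.mul_add_div hH0,
      Nat.div_eq_of_lt (by omega), add_zero]
  have hxmod : (q * l.height + r₀) % l.height = r₀ := by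
    rw [show q * l.height + r₀ = l.height * q + r₀ by ring, Nat.mul_add_mod,
      Nat.mod_eq_of_lt (by omega)]
  -- integer values of the interval endpoints
  have z1 : (((q + 1) * p : ℕ) : ℤ) = (b : ℤ) - (r₀ : ℤ) + (p : ℤ) := by
    push_cast
    linarith [hqpz]
  have z2 : (((q + 1) * p + r₀ : ℕ) : ℤ) = (b : ℤ) + (p : ℤ) := by
    push_cast
    linarith [hqpz]
  have z3 : ((q * p + r₀ : ℕ) : ℤ) = (b : ℤ) := by
    push_cast
    linarith [hqpz]
  have z4 : ((q * p + l.height : ℕ) : ℤ) = (b : ℤ) - (r₀ : ℤ) + (l.height : ℤ) := by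
    push_cast
    linarith [hqpz]
  refine ⟨l.height, q * l.height + r₀, by omega, hh, ?_, ?_⟩
  · -- H does not divide x
    intro hd
    obtain ⟨c, hc⟩ := hd
    have h0 : (q * l.height + r₀) % l.height = 0 := by
      rw [hc, Nat.mul_mod_right]
    omega
  refine ⟨⟨fun n => decide (n < 0 ∨ ((b : ℤ) - (r₀ : ℤ) + (p : ℤ) ≤ n ∧ n < (b : ℤ) + (p : ℤ)) ∨
      ((b : ℤ) ≤ n ∧ n < (b : ℤ) - (r₀ : ℤ) + (l.height : ℤ))),
      ⟨-1, fun n hn => ?_⟩, ⟨(b : ℤ) + (p : ℤ), fun n hn => ?_⟩⟩, ?_, ?_⟩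
  · simp only [decide_eq_true_eq]
    left
    omega
  · simp only [decide_eq_false_iff_not]
    rintro (h1 | ⟨h1, h2⟩ | ⟨h1, h2⟩) <;> omega
  · -- Displays
    refine ⟨fun i => if (i : ℤ) ≤ (r₀ : ℤ) then (b : ℤ) + (p : ℤ) - i
        else if (i : ℤ) ≤ (l.height : ℤ) then (b : ℤ) + (l.height : ℤ) - i
        else (l.height : ℤ) - i, ?_, ?_, ?_⟩
    · intro i hi
      dsimp only
      split_ifs <;> push_cast at * <;> omega
    · intro n
      dsimp only
      simp only [decide_eq_true_eq]
      constructor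
      · rintro (h1 | ⟨h1, h2⟩ | ⟨h1, h2⟩)
        · refine ⟨((l.height : ℤ) - n).toNat, by omega, ?_⟩
          rw [if_neg (by omega), if_neg (by omega)]
          omega
        · refine ⟨((b : ℤ) + (p : ℤ) - n).toNat, by omega, ?_⟩
          rw [if_pos (by omega)]
          omega
        · refine ⟨((b : ℤ) + (l.height : ℤ) - n).toNat, by omega, ?_⟩
          rw [if_neg (by omega), if_pos (by omega)]
          omega
      · rintro ⟨i, hi1, hai⟩
        split_ifs at hai <;> omega
    · intro i hi
      dsimp only
      split_ifs with hc1 hc2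
      · have hir : i ≤ r₀ := by exact_mod_cast hc1
        have hset : {n : ℤ | n ≤ (b : ℤ) + (p : ℤ) - (i : ℤ) ∧
            (decide (n < 0 ∨ ((b : ℤ) - (r₀ : ℤ) + (p : ℤ) ≤ n ∧ n < (b : ℤ) + (p : ℤ)) ∨
              ((b : ℤ) ≤ n ∧ n < (b : ℤ) - (r₀ : ℤ) + (l.height : ℤ)))) = false} =
            Set.Icc 0 ((b : ℤ) - 1) ∪
            Set.Icc ((b : ℤ) - (r₀ : ℤ) + (l.height : ℤ)) ((b : ℤ) - (r₀ : ℤ) + (p : ℤ) - 1) := by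
          ext n
          simp only [Set.mem_setOf_eq, decide_eq_false_iff_not, Set.mem_union, Set.mem_Icc]
          omega
        rw [hset, CS.ncard_Icc_union _ _ _ _ (by omega)]
        have := hshape1 i hi hir
        omega
      · have hir : r₀ < i := by omega
        have hih : i ≤ l.height := by exact_mod_cast hc2
        have hset : {n : ℤ | n ≤ (b : ℤ) + (l.height : ℤ) - (i : ℤ) ∧
              (decide (n < 0 ∨ ((b : ℤ) - (r₀ : ℤ) + (p : ℤ) ≤ n ∧ n < (b : ℤ) + (p : ℤ)) ∨
                ((b : ℤ) ≤ n ∧ n < (b : ℤ) - (r₀ : ℤ) + (l.height : ℤ)))) = false} =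
              Set.Icc 0 ((b : ℤ) - 1) := by
          ext n
          simp only [Set.mem_setOf_eq, decide_eq_false_iff_not, Set.mem_Icc]
          omega
        rw [hset, CS.ncard_Icc]
        have := hshape2 i hir hih
        omega
      · have hih : l.height < i := by
          by_contra hcon
          exact hc2 (by push_cast; omega)
        have hset : {n : ℤ | n ≤ (l.height : ℤ) - (i : ℤ) ∧
              (decide (n < 0 ∨ ((b : ℤ) - (r₀ : ℤ) + (p : ℤ) ≤ n ∧ n < (b : ℤ) + (p : ℤ)) ∨
                ((b : ℤ) ≤ n ∧ n < (b : ℤ) - (r₀ : ℤ) + (l.height : ℤ)))) = false} = ∅ := by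
          ext n
          simp only [Set.mem_setOf_eq, decide_eq_false_iff_not, Set.mem_empty_iff_false,
            iff_false, not_and]
          intro h1 h2
          exact h2 (Or.inl (by omega))
        rw [hset, Set.ncard_empty]
        exact hzero i hih
  · -- the bead condition
    intro n
    simp only [hxdiv, hxmod, z1, z2, z3, z4, decide_eq_true_eq]
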